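/- Let M be a compact metric space, e : ℕ → M an injective map with dense range, and P a natural measure on M. Then for every S ⊆ ℕ, the upper asymptotic density satisfies d̄(S) ≤ ν*(S) = P(cl(e(S))). -/

import Mathlib

open Filter MeasureTheory
open scoped Classical

/-- `E_N(𝟙_A) = |A ∩ [1,N]| / N`. -/
noncomputable def densSeq (A : Set ℕ) : ℕ → ℝ := fun N =>
  (((Finset.Icc 1 N).filter (fun n => n ∈ A)).card : ℝ) / N

/-- The upper asymptotic density `d̄(A) = limsup_{N→∞} |A ∩ [1,N]| / N`. -/
noncomputable def upperDens (A : Set ℕ) : ℝ := limsup (densSeq A) atTop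

/-- `P` is a natural measure (w.r.t. the dense embedding `e : ℕ → M`) if the
sequence `(e(n))` is `P`-uniformly distributed in `M` and every nonempty open set
has positive measure. -/
def IsNaturalMeasure {M : Type*} [MetricSpace M] [MeasurableSpace M]
    (e : ℕ → M) (P : Measure M) : Prop :=
  (∀ f : M → ℝ, Continuous f →
    Tendsto (fun N : ℕ => (∑ n ∈ Finset.Icc 1 N, f (e n)) / N) atTop
      (nhds (∫ α, f α ∂P))) ∧
  (∀ U : Set M, IsOpen U → U.Nonempty → 0 < P U)

/-- For a natural measure `P`, the upper asymptotic density of any `S ⊆ ℕ`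
is at most its measure density `ν*(S) = P(cl(e(S)))`. -/
theorem stmt10 {M : Type*} [MetricSpace M] [CompactSpace M]
    [MeasurableSpace M] [BorelSpace M]
    (P : Measure M) [IsProbabilityMeasure P]
    (e : ℕ → M) (he : Function.Injective e) (hd : DenseRange e)
    (hP : IsNaturalMeasure e P) (S : Set ℕ) :
    upperDens S ≤ (P (closure (e '' S))).toReal := by
  set C := closure (e '' S) with hC
  have hCclosed : IsClosed C := isClosed_closure
  refine le_of_forall_pos_le_add ?_
  intro ε hε
  -- outer regularity
  have hCne : P C ≠ ⊤ := measure_ne_top P C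
  obtain ⟨U, hCU, hUopen, hU⟩ := C.exists_isOpen_lt_add hCne
    (ENNReal.ofReal_pos.mpr hε).ne'
  -- Urysohn
  obtain ⟨f, hf0, hf1, hf01⟩ := exists_continuous_zero_one_of_isClosed
    hUopen.isClosed_compl hCclosed
    (Set.disjoint_compl_left_iff_subset.mpr hCU)
  have hfc : Continuous (f : M → ℝ) := f.continuous
  have hfnonneg : ∀ x, 0 ≤ f x := fun x => (hf01 x).1
  -- pointwise bound densSeq ≤ averages of f
  have hpt : ∀ N : ℕ, densSeq S N ≤ (∑ n ∈ Finset.Icc 1 N, f (e n)) / N := by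
    intro N
    unfold densSeq
    rcases Nat.eq_zero_or_pos N with h | h
    · simp [h]
    apply div_le_div_of_nonneg_right ?_ (Nat.cast_nonneg N : (0:ℝ) ≤ N)
    calc (((Finset.Icc 1 N).filter (fun n => n ∈ S)).card : ℝ)
          = ∑ n ∈ (Finset.Icc 1 N).filter (fun n => n ∈ S), (1 : ℝ) := by simp
        _ = ∑ n ∈ (Finset.Icc 1 N).filter (fun n => n ∈ S), f (e n) := by
            refine Finset.sum_congr rfl fun n hn => ?_
            have hn' : n ∈ S := (Finset.mem_filter.mp hn).2
            have : e n ∈ C := subset_closure ⟨n, hn', rfl⟩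
            exact (hf1 this).symm
        _ ≤ ∑ n ∈ Finset.Icc 1 N, f (e n) :=
            Finset.sum_le_sum_of_subset_of_nonneg (Finset.filter_subset _ _)
              (fun n _ _ => hfnonneg (e n))
  have htend := hP.1 f hfc
  have hlimsup : upperDens S ≤ ∫ α, f α ∂P := by
    have hb : Filter.IsBoundedUnder (· ≤ ·) atTop
        (fun N : ℕ => (∑ n ∈ Finset.Icc 1 N, f (e n)) / N) :=
      htend.isBoundedUnder_le
    have hcb : Filter.IsCoboundedUnder (· ≤ ·) atTop (densSeq S) := by
      refine Filter.IsBoundedUnder.isCoboundedUnder_le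
        (Filter.isBoundedUnder_of ⟨0, fun N => ?_⟩)
      unfold densSeq
      positivity
    calc upperDens S ≤ limsup (fun N : ℕ => (∑ n ∈ Finset.Icc 1 N, f (e n)) / N) atTop :=
          Filter.limsup_le_limsup (Filter.Eventually.of_forall hpt) hcb hb
      _ = ∫ α, f α ∂P := htend.limsup_eq
  refine hlimsup.trans ?_
  -- ∫ f ≤ P U ≤ P C + ε
  have hfU : ∀ x, f x ≤ U.indicator (fun _ => (1 : ℝ)) x := by
    intro x
    by_cases hx : x ∈ U
    · simpa [hx] using (hf01 x).2
    · have : f x = 0 := hf0 hx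
      simp [hx, this]
  have hUm : MeasurableSet U := hUopen.measurableSet
  have hint_f : Integrable (f : M → ℝ) P := hfc.integrable_of_hasCompactSupport
    (HasCompactSupport.of_compactSpace _)
  have hint_ind : Integrable (U.indicator (fun _ => (1 : ℝ))) P :=
    (integrable_const (1 : ℝ)).indicator hUm
  have h1 : ∫ α, f α ∂P ≤ ∫ α, U.indicator (fun _ => (1 : ℝ)) α ∂P :=
    integral_mono hint_f hint_ind hfU
  have h2 : ∫ α, U.indicator (fun _ => (1 : ℝ)) α ∂P = (P U).toReal := by
    rw [integral_indicator hUm]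
    simp
    rfl
  have h3 : (P U).toReal ≤ (P C).toReal + ε := by
    have := hU.le
    have hPU : P U ≤ P C + ENNReal.ofReal ε := this
    calc (P U).toReal ≤ (P C + ENNReal.ofReal ε).toReal :=
          ENNReal.toReal_mono (by finiteness) hPU
      _ = (P C).toReal + ε := by
          rw [ENNReal.toReal_add hCne (by finiteness), ENNReal.toReal_ofReal hε.le]
  linarith [h1, h2 ▸ h1]
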